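/- arXiv:1002.1057 — 3 statements merged into one kernel-verified Lean document; each statement's English description precedes it below -/
import Mathlib

section
/- Fix real numbers p₁ < 1, d₁ < 1 and 0 ≤ x₁ < x₂ < b. There exist c₀ < ∞ and n₀ < ∞ such that for every c ≥ c₀ and every integer n ≥ n₀, the random configuration built from n i.i.d. exponential(c) variables satisfies P( d([x₁, x₂]) ≥ d₁ ) ≥ p₁. (First half of Theorem 2.1 of the paper, reduced to a fixed time via pseudo-stationarity.) -/
open MeasureTheory ProbabilityTheory

open Set
open scoped ENNReal

section aux

lemma uncovered_small' {n K : ℕ} (hK : K < n) (b x₁ x₂ : ℝ) (hb : 0 < b)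
    (hx₁ : 0 ≤ x₁) (hx₂b : x₂ < b) (Y : Fin n → ℝ)
    (hmono : Monotone Y) (hnn : ∀ k, 0 ≤ Y k)
    (hcap : ∀ k : Fin n, ((k : ℕ) + 1 : ℝ) * (b / n) ≤ x₂ → (k : ℕ) + 1 ≤ K) :
    volume (Set.Icc x₁ x₂ \ ⋃ k : Fin n,
      Set.Ioo (Y k + (k : ℕ) * (b / n)) (Y k + (k : ℕ) * (b / n) + b / n))
      ≤ ENNReal.ofReal (Y ⟨K, hK⟩) := by
  have hn : 0 < n := lt_of_le_of_lt (Nat.zero_le K) hK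
  set ε : ℝ := b / n with hεdef
  have hε : 0 < ε := div_pos hb (by exact_mod_cast hn)
  have hnε : (n : ℝ) * ε = b := by
    rw [hεdef]; field_simp
  set yy : ℕ → ℝ := fun j => Y ⟨min j (n - 1), by omega⟩ with hyydef
  have hyy_mono : Monotone yy := by
    intro i j hij
    exact hmono (by simp [Fin.le_def]; omega)
  have hyy_eq : ∀ (j : ℕ) (h : j < n), yy j = Y ⟨j, h⟩ := by
    intro j h
    simp only [hyydef]
    congr 1
    exact Fin.ext (by simp; omega)
  set D : ℕ → Set ℝ := fun j =>
    if j = 0 then Icc x₁ (yy 0) else Icc (yy (j - 1) + j * ε) (yy j + j * ε) with hDdef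
  have hsubset : Set.Icc x₁ x₂ \ (⋃ k : Fin n,
      Set.Ioo (Y k + (k : ℕ) * ε) (Y k + (k : ℕ) * ε + ε)) ⊆
      ⋃ j ∈ Finset.range (K + 1), D j := by
    intro x hx
    obtain ⟨hxI, hxU⟩ := hx
    simp only [Set.mem_iUnion, Set.mem_Ioo, not_exists, not_and] at hxU
    by_cases h0 : x ≤ Y ⟨0, hn⟩
    · refine Set.mem_biUnion (Finset.mem_range.2 (Nat.succ_pos K)) ?_
      simp only [hDdef, if_pos rfl]
      exact ⟨hxI.1, by rw [hyy_eq 0 hn]; exact h0⟩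
    · push_neg at h0
      set s : Finset (Fin n) := Finset.univ.filter (fun k : Fin n => Y k + (k : ℕ) * ε < x)
        with hsdef
      have h0s : (⟨0, hn⟩ : Fin n) ∈ s := by
        simp [hsdef, h0]
      have hsne : s.Nonempty := ⟨_, h0s⟩
      set k : Fin n := s.max' hsne with hkdef
      have hks : k ∈ s := s.max'_mem hsne
      have hklt : Y k + (k : ℕ) * ε < x := by
        simpa [hsdef] using hks
      have hge : Y k + (k : ℕ) * ε + ε ≤ x := by
        by_contra h
        push_neg at h
        exact hxU k hklt h
      have hxx₂ : x ≤ x₂ := hxI.2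
      have hklast : (k : ℕ) + 1 < n := by
        by_contra h
        push_neg at h
        have hkval : (k : ℕ) = n - 1 := by omega
        have : Y k + ((k : ℕ) : ℝ) * ε + ε = Y k + (n : ℝ) * ε := by
          rw [hkval]
          push_cast [Nat.cast_sub hn]
          ring
        have hbx : b ≤ x := by
          rw [this, hnε] at hge
          linarith [hnn k]
        linarith
      have hmax : x ≤ Y ⟨(k : ℕ) + 1, hklast⟩ + ((k : ℕ) + 1 : ℝ) * ε := by
        by_contra h
        push_neg at h
        have hmem : (⟨(k : ℕ) + 1, hklast⟩ : Fin n) ∈ s := by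
          simp only [hsdef, Finset.mem_filter, Finset.mem_univ, true_and]
          exact_mod_cast h
        have := s.le_max' _ hmem
        rw [← hkdef] at this
        have : (k : ℕ) + 1 ≤ (k : ℕ) := this
        omega
      have hlow : Y k + ((k : ℕ) + 1 : ℝ) * ε ≤ x := by nlinarith [hge]
      have hcapk : (k : ℕ) + 1 ≤ K := by
        refine hcap k ?_
        nlinarith [hnn k]
      refine Set.mem_biUnion
        (show (k : ℕ) + 1 ∈ Finset.range (K + 1) from Finset.mem_range.2 (by omega)) ?_
      simp only [hDdef, if_neg (Nat.succ_ne_zero (k : ℕ))]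
      constructor
      · rw [Nat.add_sub_cancel, hyy_eq (k : ℕ) k.2]
        push_cast
        simpa using hlow
      · rw [hyy_eq ((k : ℕ) + 1) hklast]
        push_cast
        simpa using hmax
  set t : ℕ → ℝ := fun j => if j = 0 then yy 0 else yy j - yy (j - 1) with htdef
  have ht_nonneg : ∀ j, 0 ≤ t j := by
    intro j
    by_cases h : j = 0
    · simp only [htdef, if_pos h]
      exact hnn _
    · simp only [htdef, if_neg h]
      have := hyy_mono (Nat.sub_le j 1)
      linarith
  have hvol : ∀ j, volume (D j) ≤ ENNReal.ofReal (t j) := by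
    intro j
    by_cases h : j = 0
    · simp only [hDdef, htdef, if_pos h, Real.volume_Icc]
      exact ENNReal.ofReal_le_ofReal (by linarith)
    · simp only [hDdef, htdef, if_neg h, Real.volume_Icc]
      exact le_of_eq (by ring_nf)
  calc volume (Set.Icc x₁ x₂ \ ⋃ k : Fin n,
        Set.Ioo (Y k + (k : ℕ) * ε) (Y k + (k : ℕ) * ε + ε))
      ≤ volume (⋃ j ∈ Finset.range (K + 1), D j) := measure_mono hsubset
    _ ≤ ∑ j ∈ Finset.range (K + 1), volume (D j) := measure_biUnion_finset_le _ _
    _ ≤ ∑ j ∈ Finset.range (K + 1), ENNReal.ofReal (t j) :=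
        Finset.sum_le_sum fun j _ => hvol j
    _ = ENNReal.ofReal (∑ j ∈ Finset.range (K + 1), t j) :=
        (ENNReal.ofReal_sum_of_nonneg fun j _ => ht_nonneg j).symm
    _ = ENNReal.ofReal (Y ⟨K, hK⟩) := by
        congr 1
        rw [Finset.sum_range_succ']
        have h1 : ∀ i ∈ Finset.range K, t (i + 1) = yy (i + 1) - yy i := by
          intro i _
          simp [htdef]
        rw [Finset.sum_congr rfl h1, Finset.sum_range_sub yy]
        simp only [htdef, if_pos rfl]
        rw [← hyy_eq K hK]
        ring

lemma expMeasure_Ioi {c δ : ℝ} (hc : 0 < c) (hδ : 0 ≤ δ) :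
    expMeasure c (Set.Ioi δ) = ENNReal.ofReal (Real.exp (-(c * δ))) := by
  haveI : IsProbabilityMeasure (expMeasure c) := isProbabilityMeasure_expMeasure hc
  have hexp1 : Real.exp (-(c * δ)) ≤ 1 := by
    rw [← Real.exp_zero]
    exact Real.exp_le_exp.2 (by nlinarith)
  have h1 : (expMeasure c (Set.Iic δ)).toReal = 1 - Real.exp (-(c * δ)) := by
    rw [← measureReal_def, ← cdf_eq_real]
    have h2 := cdf_expMeasure_eq_lintegral hc δ
    rw [h2, lintegral_exponentialPDF_eq_antiDeriv hc δ, if_pos hδ,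
      ENNReal.toReal_ofReal (by linarith)]
  have hc2 : expMeasure c (Set.Iic δ) = ENNReal.ofReal (1 - Real.exp (-(c * δ))) := by
    rw [← h1, ENNReal.ofReal_toReal (measure_ne_top _ _)]
  have h3 := prob_compl_eq_one_sub (μ := expMeasure c) (measurableSet_Iic (a := δ))
  rw [Set.compl_Iic] at h3
  rw [h3, hc2, ← ENNReal.ofReal_one, ← ENNReal.ofReal_sub _ (by linarith)]
  norm_num

lemma expMeasure_Iio_zero {c : ℝ} : expMeasure c (Set.Iio 0) = 0 := by
  rw [expMeasure, gammaMeasure, withDensity_apply _ measurableSet_Iio]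
  exact lintegral_exponentialPDF_of_nonpos (le_refl (0 : ℝ)) (r := c)

end aux

set_option maxHeartbeats 1000000

/-- First half of Theorem 2.1 (at a fixed time, via pseudo-stationarity): for
`p₁ < 1`, `d₁ < 1`, `0 ≤ x₁ < x₂ < b`, there exist `c₀` and `n₀` such that for every
`c ≥ c₀` and every `n ≥ n₀`, the configuration of `n` intervals of length `ε = b/n`
whose centers are `X^k = Y^k + (k−1)ε + ε/2` (with `Y` the nondecreasing rearrangement
of `n` i.i.d. exponential(`c`) variables `Z`) satisfies
`P( d([x₁, x₂]) ≥ d₁ ) ≥ p₁`, where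
`d([u, w]) = λ([u, w] ∩ ⋃_k I^k)/(w − u)` and `I^k = (X^k − ε/2, X^k + ε/2)`.
(Indices are `0`-based, so `X_k = Y_k + kε + ε/2` and `I^k = (Y_k + kε, Y_k + kε + ε)`.) -/
theorem crowding_density_high_left (p₁ d₁ b x₁ x₂ : ℝ) (hb : 0 < b)
    (hp₁ : p₁ < 1) (hd₁ : d₁ < 1) (hx₁ : 0 ≤ x₁) (hx₁₂ : x₁ < x₂) (hx₂b : x₂ < b) :
    ∃ (c₀ : ℝ) (n₀ : ℕ), ∀ c : ℝ, c₀ ≤ c → ∀ n : ℕ, n₀ ≤ n → 1 ≤ n →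
      ∀ (Ω : Type) [MeasurableSpace Ω] (μ : Measure Ω), IsProbabilityMeasure μ →
        ∀ Z Y : Fin n → Ω → ℝ,
          iIndepFun Z μ →
          (∀ k, Measure.map (Z k) μ = expMeasure c) →
          (∀ ω : Ω, ∃ π : Equiv.Perm (Fin n),
            (∀ k, Y k ω = Z (π k) ω) ∧ Monotone fun k => Y k ω) →
          ENNReal.ofReal p₁ ≤
            μ {ω : Ω | d₁ ≤
              (volume (Set.Icc x₁ x₂ ∩
                  ⋃ k : Fin n,
                    Set.Ioo (Y k ω + k * (b / n)) (Y k ω + k * (b / n) + b / n))).toReal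
                / (x₂ - x₁)} := by
  set Δ : ℝ := x₂ - x₁ with hΔdef
  have hΔ : 0 < Δ := sub_pos.2 hx₁₂
  set δ : ℝ := min Δ ((1 - d₁) * Δ) with hδdef
  have hδpos : 0 < δ := lt_min hΔ (mul_pos (by linarith) hΔ)
  have hδle : δ ≤ (1 - d₁) * Δ := min_le_right _ _
  set r : ℝ := x₂ / b with hrdef
  have hr1 : r < 1 := (div_lt_one hb).2 hx₂b
  have hr0 : 0 < r := div_pos (lt_of_le_of_lt hx₁ hx₁₂) hb
  set c₀ : ℝ := Real.log 4 / (δ * (1 - r)) with hc₀def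
  have hlog4 : 0 < Real.log 4 := Real.log_pos (by norm_num)
  have hc₀pos : 0 < c₀ := div_pos hlog4 (mul_pos hδpos (by linarith))
  refine ⟨c₀, ⌈(1 - p₁)⁻¹⌉₊ + 1, ?_⟩
  intro c hc n hn hn1 Ω _ μ hμ Z Y hindep hmap hperm
  have hcpos : 0 < c := lt_of_lt_of_le hc₀pos hc
  have hnR : (0 : ℝ) < n := by exact_mod_cast hn1
  -- the index K
  have hx₂0 : 0 < x₂ := lt_of_le_of_lt hx₁ hx₁₂
  set K : ℕ := ⌊x₂ * n / b⌋₊ with hKdef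
  have hxnb0 : 0 ≤ x₂ * n / b := by positivity
  have hKn : K < n := by
    rw [hKdef]
    refine Nat.floor_lt hxnb0 |>.2 ?_
    rw [div_lt_iff₀ hb]
    nlinarith
  have hKle : (K : ℝ) ≤ x₂ * n / b := Nat.floor_le hxnb0
  set M : ℕ := n - K with hMdef
  have hMcast : (M : ℝ) = (n : ℝ) - K := by
    rw [hMdef, Nat.cast_sub hKn.le]
  have hM : (1 - r) * n ≤ (M : ℝ) := by
    rw [hMcast]
    have : x₂ * n / b = r * n := by rw [hrdef]; ring
    nlinarith [hKle]
  have hcap : ∀ k : Fin n, ((k : ℕ) + 1 : ℝ) * (b / n) ≤ x₂ → (k : ℕ) + 1 ≤ K := by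
    intro k hk
    refine Nat.le_floor ?_
    push_cast
    rw [le_div_iff₀ hb]
    have hbn : 0 < b / n := div_pos hb hnR
    have hbn' : (b / n) * n = b := div_mul_cancel₀ b (ne_of_gt hnR)
    nlinarith [hk, hbn', hnR]
  -- measurability of Z
  haveI hPexp : IsProbabilityMeasure (expMeasure c) := isProbabilityMeasure_expMeasure hcpos
  have haeZ : ∀ k, AEMeasurable (Z k) μ := by
    intro k
    by_contra h
    have h0 := Measure.map_of_not_aemeasurable h
    rw [hmap k] at h0
    exact IsProbabilityMeasure.ne_zero (expMeasure c) h0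
  have hpre : ∀ (k) (s : Set ℝ), MeasurableSet s → μ (Z k ⁻¹' s) = expMeasure c s := by
    intro k s hs
    rw [← hmap k, Measure.map_apply_of_aemeasurable (haeZ k) hs]
  -- the a.e. nonnegativity
  set N : Set Ω := ⋃ k : Fin n, Z k ⁻¹' Set.Iio 0 with hNdef
  have hN : μ N = 0 := by
    refine measure_iUnion_null fun k => ?_
    rw [hpre k _ measurableSet_Iio, expMeasure_Iio_zero]
  -- the count event
  set C : Set Ω :=
    {ω | K + 1 ≤ (Finset.univ.filter (fun k : Fin n => Z k ω ≤ δ)).card} with hCdef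
  -- C \ N is included in the target event
  have hCsub : C \ N ⊆ {ω : Ω | d₁ ≤
      (volume (Set.Icc x₁ x₂ ∩ ⋃ k : Fin n,
        Set.Ioo (Y k ω + k * (b / n)) (Y k ω + k * (b / n) + b / n))).toReal / Δ} := by
    intro ω hω
    obtain ⟨hωC, hωN⟩ := hω
    have hZnn : ∀ k, 0 ≤ Z k ω := by
      intro k
      by_contra h
      exact hωN (Set.mem_iUnion.2 ⟨k, by simpa using lt_of_not_ge h⟩)
    obtain ⟨pe, hpe, hYmono⟩ := hperm ω
    have hYnn : ∀ k, 0 ≤ Y k ω := fun k => (hpe k) ▸ hZnn (pe k)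
    -- card of filters agree
    have hcard : (Finset.univ.filter (fun k : Fin n => Y k ω ≤ δ)).card
        = (Finset.univ.filter (fun k : Fin n => Z k ω ≤ δ)).card := by
      refine Finset.card_bij' (fun k _ => pe k) (fun m _ => pe.symm m) ?_ ?_ ?_ ?_
      · intro k hk
        simp only [Finset.mem_filter, Finset.mem_univ, true_and] at hk ⊢
        rwa [← hpe k]
      · intro m hm
        simp only [Finset.mem_filter, Finset.mem_univ, true_and] at hm ⊢
        rwa [hpe (pe.symm m), Equiv.apply_symm_apply]
      · intro k _; exact Equiv.symm_apply_apply _ _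
      · intro m _; exact Equiv.apply_symm_apply _ _
    have hcount : K + 1 ≤ (Finset.univ.filter (fun k : Fin n => Y k ω ≤ δ)).card := by
      rw [hcard]; exact hωC
    -- pigeonhole : Y_K ≤ δ
    have hYK : Y ⟨K, hKn⟩ ω ≤ δ := by
      by_contra h
      push_neg at h
      have hsub : Finset.univ.filter (fun k : Fin n => Y k ω ≤ δ) ⊆
          Finset.univ.filter (fun k : Fin n => (k : ℕ) < K) := by
        intro j hj
        simp only [Finset.mem_filter, Finset.mem_univ, true_and] at hj ⊢
        by_contra hK'
        push_neg at hK'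
        have : Y ⟨K, hKn⟩ ω ≤ Y j ω := hYmono (show (⟨K, hKn⟩ : Fin n) ≤ j from hK')
        linarith
      have hcard2 : (Finset.univ.filter (fun k : Fin n => (k : ℕ) < K)).card ≤ K := by
        calc (Finset.univ.filter (fun k : Fin n => (k : ℕ) < K)).card
            ≤ (Finset.range K).card := Finset.card_le_card_of_injOn (fun j => (j : ℕ))
              (fun j hj => Finset.mem_range.2 (Finset.mem_filter.1 hj).2)
              (fun a _ b _ hab => Fin.ext hab)
          _ = K := Finset.card_range K
      have := (Finset.card_le_card hsub).trans hcard2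
      omega
    have hYKδ : Y ⟨K, hKn⟩ ω ≤ δ := hYK
    -- geometry
    have hgeo := uncovered_small' hKn b x₁ x₂ hb hx₁ hx₂b (fun k => Y k ω)
      (fun i j hij => hYmono hij) hYnn hcap
    set U : Set ℝ := ⋃ k : Fin n,
      Set.Ioo (Y k ω + (k : ℕ) * (b / n)) (Y k ω + (k : ℕ) * (b / n) + b / n) with hUdef
    set A : Set ℝ := Set.Icc x₁ x₂ ∩ U with hAdef
    have hAfin : volume A ≤ ENNReal.ofReal Δ := by
      refine le_trans (measure_mono Set.inter_subset_left) ?_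
      rw [Real.volume_Icc]
    have hsplit : ENNReal.ofReal Δ ≤ volume A + ENNReal.ofReal δ := by
      have h1 : Set.Icc x₁ x₂ ⊆ A ∪ (Set.Icc x₁ x₂ \ U) := by
        intro x hx
        by_cases hxU : x ∈ U
        · exact Or.inl ⟨hx, hxU⟩
        · exact Or.inr ⟨hx, hxU⟩
      calc ENNReal.ofReal Δ = volume (Set.Icc x₁ x₂) := by rw [Real.volume_Icc]
        _ ≤ volume A + volume (Set.Icc x₁ x₂ \ U) :=
            le_trans (measure_mono h1) (measure_union_le _ _)
        _ ≤ volume A + ENNReal.ofReal δ := by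
            gcongr
            exact hgeo.trans (ENNReal.ofReal_le_ofReal hYKδ)
    have hAne : volume A ≠ ⊤ := ne_top_of_le_ne_top ENNReal.ofReal_ne_top hAfin
    have hreal : Δ ≤ (volume A).toReal + δ := by
      have := ENNReal.toReal_mono (by
        exact ENNReal.add_ne_top.2 ⟨hAne, ENNReal.ofReal_ne_top⟩) hsplit
      rwa [ENNReal.toReal_add hAne ENNReal.ofReal_ne_top, ENNReal.toReal_ofReal hΔ.le,
        ENNReal.toReal_ofReal hδpos.le] at this
    show d₁ ≤ (volume (Set.Icc x₁ x₂ ∩ ⋃ k : Fin n,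
        Set.Ioo (Y k ω + k * (b / n)) (Y k ω + k * (b / n) + b / n))).toReal / Δ
    rw [le_div_iff₀ hΔ]
    have : volume (Set.Icc x₁ x₂ ∩ ⋃ k : Fin n,
        Set.Ioo (Y k ω + k * (b / n)) (Y k ω + k * (b / n) + b / n)) = volume A := rfl
    rw [this]
    have hexp : (1 - d₁) * Δ = Δ - d₁ * Δ := by ring
    linarith [hreal, hδle, hexp]
  -- probability of the complement of C
  have hCc : μ Cᶜ ≤ ENNReal.ofReal (1 - p₁) := by
    set q : ℝ≥0∞ := ENNReal.ofReal (Real.exp (-(c * δ))) with hqdef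
    have hqval : ∀ k : Fin n, μ (Z k ⁻¹' Set.Ioi δ) = q := fun k => by
      rw [hpre k _ measurableSet_Ioi, expMeasure_Ioi hcpos hδpos.le]
    have hsub2 : Cᶜ ⊆ ⋃ T ∈ Finset.powersetCard M (Finset.univ : Finset (Fin n)),
        ⋂ i ∈ T, Z i ⁻¹' Set.Ioi δ := by
      intro ω hω
      simp only [hCdef, Set.mem_compl_iff, Set.mem_setOf_eq, not_le] at hω
      have hsplitcard := Finset.card_filter_add_card_filter_not
        (s := (Finset.univ : Finset (Fin n))) (p := fun k => Z k ω ≤ δ)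
      have huniv : (Finset.univ : Finset (Fin n)).card = n := by
        rw [Finset.card_univ, Fintype.card_fin]
      have hMle : M ≤ (Finset.univ.filter (fun k : Fin n => ¬ Z k ω ≤ δ)).card := by
        omega
      obtain ⟨T, hT, hTcard⟩ := Finset.exists_subset_card_eq hMle
      refine Set.mem_biUnion
        (Finset.mem_powersetCard.2 ⟨Finset.subset_univ T, hTcard⟩) ?_
      refine Set.mem_iInter₂.2 fun i hi => ?_
      exact lt_of_not_ge (Finset.mem_filter.1 (hT hi)).2
    have h1p : 0 < 1 - p₁ := by linarith
    have hceil : (1 - p₁)⁻¹ ≤ (n : ℝ) := by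
      refine le_trans (Nat.le_ceil _) ?_
      exact_mod_cast le_trans (Nat.le_succ _) hn
    have hn2 : (n : ℝ) + 1 ≤ 2 ^ n := by
      exact_mod_cast (Nat.lt_two_pow_self (n := n))
    have hchoose : (n.choose M : ℝ) ≤ 2 ^ n := by
      have hnat : n.choose M ≤ 2 ^ n := by
        calc n.choose M ≤ ∑ m ∈ Finset.range (n + 1), n.choose m :=
              Finset.single_le_sum (fun m _ => Nat.zero_le _)
                (Finset.mem_range.2 (by omega))
          _ = 2 ^ n := Nat.sum_range_choose n
      exact_mod_cast hnat
    have he : Real.exp (-(c * δ)) ≤ Real.exp (-(c₀ * δ)) :=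
      Real.exp_le_exp.2 (by nlinarith [hδpos])
    have hlogeq : c₀ * (δ * (1 - r)) = Real.log 4 :=
      div_mul_cancel₀ _ (ne_of_gt (mul_pos hδpos (by linarith)))
    have hfin : ((n : ℝ) + 1)⁻¹ ≤ 1 - p₁ := by
      have hpos : (0 : ℝ) < (n : ℝ) + 1 := by positivity
      have hkey : 1 ≤ (1 - p₁) * ((n : ℝ) + 1) := by
        nlinarith [mul_inv_cancel₀ (ne_of_gt h1p), hceil]
      calc ((n : ℝ) + 1)⁻¹ = 1 / ((n : ℝ) + 1) := (one_div _).symm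
        _ ≤ ((1 - p₁) * ((n : ℝ) + 1)) / ((n : ℝ) + 1) := by gcongr
        _ = 1 - p₁ := mul_div_cancel_right₀ _ (ne_of_gt hpos)
    have hrealbound : (n.choose M : ℝ) * Real.exp (-(c * δ)) ^ M ≤ 1 - p₁ := by
      calc (n.choose M : ℝ) * Real.exp (-(c * δ)) ^ M
          ≤ 2 ^ n * Real.exp (-(c₀ * δ)) ^ M := by
            refine mul_le_mul hchoose (pow_le_pow_left₀ (Real.exp_nonneg _) he M)
              (by positivity) (by positivity)
        _ = 2 ^ n * Real.exp ((M : ℝ) * (-(c₀ * δ))) := by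
            rw [Real.exp_nat_mul]
        _ ≤ 2 ^ n * Real.exp ((n : ℝ) * (-Real.log 4)) := by
            refine mul_le_mul_of_nonneg_left (Real.exp_le_exp.2 ?_) (by positivity)
            have hc₀δ : 0 < c₀ * δ := mul_pos hc₀pos hδpos
            nlinarith [hM, hc₀δ, hlogeq]
        _ = 2 ^ n * (4⁻¹ : ℝ) ^ n := by
            rw [Real.exp_nat_mul, Real.exp_neg, Real.exp_log (by norm_num : (0:ℝ) < 4)]
        _ = (2⁻¹ : ℝ) ^ n := by
            rw [← mul_pow]; norm_num
        _ = ((2 : ℝ) ^ n)⁻¹ := by rw [inv_pow]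
        _ ≤ ((n : ℝ) + 1)⁻¹ := by
            apply inv_anti₀ (by positivity) hn2
        _ ≤ 1 - p₁ := hfin
    calc μ Cᶜ
        ≤ μ (⋃ T ∈ Finset.powersetCard M (Finset.univ : Finset (Fin n)),
            ⋂ i ∈ T, Z i ⁻¹' Set.Ioi δ) := measure_mono hsub2
      _ ≤ ∑ T ∈ Finset.powersetCard M (Finset.univ : Finset (Fin n)),
            μ (⋂ i ∈ T, Z i ⁻¹' Set.Ioi δ) := measure_biUnion_finset_le _ _
      _ = ∑ T ∈ Finset.powersetCard M (Finset.univ : Finset (Fin n)), q ^ M := by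
          refine Finset.sum_congr rfl fun T hT => ?_
          rw [hindep.meas_biInter (fun i _ => ⟨Set.Ioi δ, measurableSet_Ioi, rfl⟩)]
          rw [Finset.prod_congr rfl (fun i _ => hqval i), Finset.prod_const,
            (Finset.mem_powersetCard.1 hT).2]
      _ = (n.choose M : ℝ≥0∞) * q ^ M := by
          rw [Finset.sum_const, Finset.card_powersetCard, Finset.card_univ,
            Fintype.card_fin, nsmul_eq_mul]
      _ = ENNReal.ofReal ((n.choose M : ℝ) * Real.exp (-(c * δ)) ^ M) := by
          rw [ENNReal.ofReal_mul (by positivity), ENNReal.ofReal_pow (Real.exp_nonneg _),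
            ENNReal.ofReal_natCast]
      _ ≤ ENNReal.ofReal (1 - p₁) := ENNReal.ofReal_le_ofReal hrealbound
  -- conclude
  have h1le : (1 : ℝ≥0∞) ≤ μ C + μ Cᶜ := by
    calc (1 : ℝ≥0∞) = μ Set.univ := (measure_univ (μ := μ)).symm
      _ = μ (C ∪ Cᶜ) := by rw [Set.union_compl_self]
      _ ≤ μ C + μ Cᶜ := measure_union_le _ _
  have hCge : 1 - ENNReal.ofReal (1 - p₁) ≤ μ C := by
    refine le_trans (tsub_le_tsub_left hCc 1) ?_
    exact tsub_le_iff_right.2 h1le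
  have hμC : ENNReal.ofReal p₁ ≤ μ C := by
    refine le_trans ?_ hCge
    have hps : ENNReal.ofReal p₁ = ENNReal.ofReal (1 - (1 - p₁)) := by norm_num
    rw [hps, ENNReal.ofReal_sub _ (by linarith), ENNReal.ofReal_one]
  have hCdiff : μ C ≤ μ (C \ N) := by
    calc μ C ≤ μ ((C \ N) ∪ N) := measure_mono (by
        intro ω hω
        by_cases h : ω ∈ N
        · exact Or.inr h
        · exact Or.inl ⟨hω, h⟩)
      _ ≤ μ (C \ N) + μ N := measure_union_le _ _
      _ = μ (C \ N) := by rw [hN, add_zero]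
  exact le_trans hμC (le_trans hCdiff (measure_mono hCsub))
end

section
/- Let b, c > 0 and 0 ≤ y₁ < y₂, set x₂ = y₂ + b − b·e^{−c·y₂}, and assume x₂ < b. Then b·∫_{y₁}^{y₂} c·e^{−cz} dz / ( y₂ − y₁ + b·∫_{y₁}^{y₂} c·e^{−cz} dz ) ≥ c·(b − x₂) / ( 1 + c·(b − x₂) ). -/
/-- For `b, c > 0`, `0 ≤ y₁ < y₂`, `x₂ = y₂ + b − b·e^{−c·y₂}` with `x₂ < b`, the key chain
of inequalities in the proof of Theorem 2.1:
`b·∫_{y₁}^{y₂} c·e^{−cz} dz / (y₂ − y₁ + b·∫_{y₁}^{y₂} c·e^{−cz} dz) ≥ c(b − x₂)/(1 + c(b − x₂))`. -/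
theorem crowding_fraction_lower_bound (b c y₁ y₂ x₂ : ℝ) (hb : 0 < b) (hc : 0 < c)
    (hy₁ : 0 ≤ y₁) (hy₁₂ : y₁ < y₂) (hx₂ : x₂ = y₂ + b - b * Real.exp (-c * y₂))
    (hx₂b : x₂ < b) :
    b * (∫ z in y₁..y₂, c * Real.exp (-c * z)) /
        (y₂ - y₁ + b * ∫ z in y₁..y₂, c * Real.exp (-c * z)) ≥
      c * (b - x₂) / (1 + c * (b - x₂)) := by
  have hint : ∫ z in y₁..y₂, c * Real.exp (-c * z)
      = Real.exp (-c*y₁) - Real.exp (-c*y₂) := by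
    have h : ∀ z : ℝ, HasDerivAt (fun z => -Real.exp (-c * z)) (c * Real.exp (-c * z)) z := by
      intro z
      have h1 : HasDerivAt (fun z : ℝ => -c * z) (-c) z := by
        simpa using (hasDerivAt_id z).const_mul (-c)
      have := (Real.hasDerivAt_exp (-c*z)).comp z h1
      convert this.neg using 1
      all_goals first | rfl | ring
    rw [intervalIntegral.integral_eq_sub_of_hasDerivAt (fun z _ => h z)]
    · ring
    · exact (continuous_const.mul
        (Real.continuous_exp.comp (continuous_const.mul continuous_id))).intervalIntegrable _ _
  rw [hint]
  set E1 := Real.exp (-c*y₁) with hE1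
  set E2 := Real.exp (-c*y₂) with hE2
  have hE2pos : 0 < E2 := Real.exp_pos _
  have hBpos : 0 < b - x₂ := by linarith
  have hBle : b - x₂ ≤ b * E2 := by
    rw [hx₂]; nlinarith
  -- key: E1 - E2 ≥ c * (y₂ - y₁) * E2, since exp(c(y₂-y₁)) ≥ 1 + c(y₂-y₁)
  have hexp : E1 = E2 * Real.exp (c * (y₂ - y₁)) := by
    rw [hE1, hE2, ← Real.exp_add]; ring_nf
  have hone : c * (y₂ - y₁) + 1 ≤ Real.exp (c * (y₂ - y₁)) := Real.add_one_le_exp _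
  have hkey : c * (y₂ - y₁) * E2 ≤ E1 - E2 := by
    rw [hexp]; nlinarith
  have hApos : 0 < E1 - E2 := by nlinarith [mul_pos (mul_pos hc (sub_pos.mpr hy₁₂)) hE2pos]
  have hA : c * (b - x₂) * (y₂ - y₁) ≤ b * (E1 - E2) := by
    nlinarith [mul_le_mul_of_nonneg_left hBle (le_of_lt (mul_pos hc (by linarith : (0:ℝ) < y₂ - y₁)))]
  have hd1 : 0 < 1 + c * (b - x₂) := by positivity
  have hd2 : 0 < y₂ - y₁ + b * (E1 - E2) := by nlinarith
  rw [ge_iff_le, div_le_div_iff₀ hd1 hd2]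
  nlinarith
end

section
/- Let a, σ, v₀ > 0 satisfy (σ²/(2a))·( e^{2a·v₀/σ²} − 1 ) = 1. Let 0 ≤ y₁ < y₂ ≤ v₀, let φ(v) = e^{ 2a(v₀ − v)/σ² } − 1, and set x₂ = ∫_0^{y₂} φ(v) dv + y₂. Then ∫_{y₁}^{y₂} φ(v) dv / ( y₂ − y₁ + ∫_{y₁}^{y₂} φ(v) dv ) ≥ ( 1 − x₂ ) / ( 1 − x₂ + σ²/(2a) ). -/
/-- For `a, σ, v₀ > 0` with `(σ²/(2a))·(e^{2a·v₀/σ²} − 1) = 1`, `0 ≤ y₁ < y₂ ≤ v₀`,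
`φ(v) = e^{2a(v₀ − v)/σ²} − 1` and `x₂ = ∫_0^{y₂} φ(v) dv + y₂`, one has
`∫_{y₁}^{y₂} φ / (y₂ − y₁ + ∫_{y₁}^{y₂} φ) ≥ (1 − x₂)/(1 − x₂ + σ²/(2a))`. -/
theorem crowding_density_profile_bound (a σ v₀ y₁ y₂ x₂ : ℝ) (ha : 0 < a) (hσ : 0 < σ)
    (hv₀ : 0 < v₀)
    (hnorm : σ ^ 2 / (2 * a) * (Real.exp (2 * a * v₀ / σ ^ 2) - 1) = 1)
    (hy₁ : 0 ≤ y₁) (hy₁₂ : y₁ < y₂) (hy₂ : y₂ ≤ v₀)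
    (φ : ℝ → ℝ) (hφ : ∀ v, φ v = Real.exp (2 * a * (v₀ - v) / σ ^ 2) - 1)
    (hx₂ : x₂ = (∫ v in (0 : ℝ)..y₂, φ v) + y₂) :
    (∫ v in y₁..y₂, φ v) / (y₂ - y₁ + ∫ v in y₁..y₂, φ v) ≥
      (1 - x₂) / (1 - x₂ + σ ^ 2 / (2 * a)) := by
  have hσ2 : (0:ℝ) < σ ^ 2 := by positivity
  set c : ℝ := 2 * a / σ ^ 2 with hc_def
  have hc : 0 < c := by positivity
  have hφ' : ∀ v, φ v = Real.exp (c * (v₀ - v)) - 1 := by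
    intro v
    rw [hφ]
    congr 1
    rw [hc_def]
    ring
  have hcont : Continuous φ := by
    have : φ = fun v => Real.exp (c * (v₀ - v)) - 1 := funext hφ'
    rw [this]; continuity
  have hint : ∀ s t : ℝ, (∫ v in s..t, φ v)
      = (Real.exp (c * (v₀ - s)) - Real.exp (c * (v₀ - t))) / c - (t - s) := by
    intro s t
    have h : ∀ v ∈ Set.uIcc s t, HasDerivAt
        (fun v => -(Real.exp (c * (v₀ - v)) / c) - v) (φ v) v := by
      intro v _
      have h1 : HasDerivAt (fun v : ℝ => c * (v₀ - v)) (c * (-1)) v :=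
        ((hasDerivAt_id v).const_sub v₀).const_mul c
      have h2 := ((h1.exp.div_const c).neg).sub (hasDerivAt_id v)
      refine h2.congr_deriv ?_
      rw [hφ' v]
      field_simp
    have := intervalIntegral.integral_eq_sub_of_hasDerivAt h
      (hcont.intervalIntegrable s t)
    rw [this]
    ring
  set A : ℝ := Real.exp (c * (v₀ - y₂)) with hA_def
  set B : ℝ := Real.exp (c * (v₀ - y₁)) with hB_def
  have hA0 : 0 < A := Real.exp_pos _
  have hA1 : 1 ≤ A := Real.one_le_exp (by nlinarith)
  have hE : c * (y₂ - y₁) + 1 ≤ Real.exp (c * (y₂ - y₁)) := Real.add_one_le_exp _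
  have hAB : A * Real.exp (c * (y₂ - y₁)) = B := by
    rw [hA_def, hB_def, ← Real.exp_add]; ring_nf
  have hBA : A < B := by
    have : (1:ℝ) < Real.exp (c * (y₂ - y₁)) := by
      rw [show (1:ℝ) = Real.exp 0 by simp]
      exact Real.exp_lt_exp.mpr (by nlinarith)
    nlinarith
  have hecv : Real.exp (c * v₀) = c + 1 := by
    have h1c : σ ^ 2 / (2 * a) = 1 / c := by rw [hc_def]; field_simp
    have h2 : 2 * a * v₀ / σ ^ 2 = c * v₀ := by rw [hc_def]; ring
    rw [h1c, h2] at hnorm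
    field_simp at hnorm
    linarith
  have hx₂' : 1 - x₂ = (A - 1) / c := by
    rw [hx₂, hint 0 y₂]
    rw [show c * (v₀ - 0) = c * v₀ by ring, hecv]
    field_simp
    ring
  have h1c : σ ^ 2 / (2 * a) = 1 / c := by rw [hc_def]; field_simp
  rw [hint y₁ y₂, hx₂', h1c]
  have hden1 : 0 < y₂ - y₁ + ((B - A) / c - (y₂ - y₁)) := by
    have : y₂ - y₁ + ((B - A) / c - (y₂ - y₁)) = (B - A) / c := by ring
    rw [this]; exact div_pos (by linarith) hc
  have hden2 : 0 < (A - 1) / c + 1 / c := by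
    have : (A - 1) / c + 1 / c = A / c := by ring
    rw [this]; positivity
  rw [ge_iff_le, div_le_div_iff₀ hden2 hden1]
  have key : c * (y₂ - y₁) * A ≤ B - A := by nlinarith
  have h1 : (A - 1) / c * (y₂ - y₁ + ((B - A) / c - (y₂ - y₁)))
      = (A - 1) * (B - A) / c ^ 2 := by field_simp; ring
  have h2 : ((B - A) / c - (y₂ - y₁)) * ((A - 1) / c + 1 / c)
      = ((B - A) - c * (y₂ - y₁)) * A / c ^ 2 := by
    rw [← add_div, div_sub' (ne_of_gt hc), div_mul_div_comm]
    rw [show c * c = c ^ 2 by ring]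
    ring_nf
  rw [h1, h2]
  apply div_le_div_of_nonneg_right _ (by positivity)
  nlinarith
end
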